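/- arXiv:2108.12544 — 6 statements merged into one kernel-verified Lean document; each statement's English description precedes it below -/
import Mathlib

section
/- Let C be an [n,k] code over F_q with generator matrix G. Then C is an LCD code (i.e., C ∩ C⊥ = {0}) if and only if the k×k matrix G·Gᵀ is nonsingular. -/
open Matrix

/-- The dual code of a linear code `C`, with respect to the standard inner product. -/
def dualCode {F : Type*} [Field F] {ι : Type*} [Fintype ι]
    (C : Submodule F (ι → F)) : Submodule F (ι → F) where
  carrier := {x | ∀ c ∈ C, x ⬝ᵥ c = 0}
  zero_mem' := by intro c hc; simp
  add_mem' := by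
    intro a b ha hb c hc
    simp [add_dotProduct, ha c hc, hb c hc]
  smul_mem' := by
    intro t a ha c hc
    simp [smul_dotProduct, ha c hc]

theorem lcd_iff_isUnit_det_mul_transpose
    {F : Type*} [Field F] [Fintype F] {n k : ℕ}
    (C : Submodule F (Fin n → F)) (G : Matrix (Fin k) (Fin n) F)
    (hspan : Submodule.span F (Set.range G) = C)
    (hind : LinearIndependent F G) :
    C ⊓ dualCode C = ⊥ ↔ IsUnit (G * Gᵀ).det := by
  have hmem : ∀ x : Fin n → F, x ∈ C ↔ ∃ v, Gᵀ *ᵥ v = x := by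
    intro x
    rw [← hspan]
    erw [← Finsupp.range_linearCombination]
    constructor
    · rintro ⟨l, rfl⟩
      refine ⟨fun i => l i, ?_⟩
      ext j
      erw [Finsupp.linearCombination_apply]
      simp [Matrix.mulVec, dotProduct, Finsupp.linearCombination_apply,
        Finsupp.sum_fintype, mul_comm]
    · rintro ⟨v, rfl⟩
      refine ⟨Finsupp.equivFunOnFinite.symm v, ?_⟩
      ext j
      erw [Finsupp.linearCombination_apply]
      simp [Matrix.mulVec, dotProduct, Finsupp.linearCombination_apply,
        Finsupp.sum_fintype, mul_comm]
  have hrow : ∀ i, G i ∈ C := by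
    intro i
    rw [← hspan]
    exact Submodule.subset_span ⟨i, rfl⟩
  have hker : ∀ v : Fin k → F, Gᵀ *ᵥ v = 0 → v = 0 := by
    intro v hv
    have := Fintype.linearIndependent_iff.mp hind v ?_
    · exact funext this
    · have : ∀ j, (Gᵀ *ᵥ v) j = (∑ i, v i • G i) j := by
        intro j
        simp [Matrix.mulVec, dotProduct, Finset.sum_apply, mul_comm]
      rw [show (∑ i, v i • G i) = Gᵀ *ᵥ v from (funext fun j => (this j).symm)]
      exact hv
  rw [isUnit_iff_ne_zero, Ne, ← Matrix.exists_mulVec_eq_zero_iff]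
  constructor
  · intro h
    rintro ⟨v, hv0, hv⟩
    apply hv0
    set x := Gᵀ *ᵥ v with hx
    have hxC : x ∈ C := (hmem x).mpr ⟨v, rfl⟩
    have hGx : G *ᵥ x = 0 := by
      rw [hx, Matrix.mulVec_mulVec, hv]
    have hxd : x ∈ dualCode C := by
      intro c hc
      obtain ⟨w, rfl⟩ := (hmem c).mp hc
      calc x ⬝ᵥ (Gᵀ *ᵥ w) = (x ᵥ* Gᵀ) ⬝ᵥ w := Matrix.dotProduct_mulVec x Gᵀ w
        _ = (G *ᵥ x) ⬝ᵥ w := by rw [Matrix.vecMul_transpose]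
        _ = 0 := by rw [hGx, zero_dotProduct]
    have : x = 0 := by
      have := h ▸ Submodule.mem_inf.mpr ⟨hxC, hxd⟩
      simpa using this
    exact hker v this
  · intro h
    rw [Submodule.eq_bot_iff]
    rintro x ⟨hxC, hxd⟩
    obtain ⟨v, rfl⟩ := (hmem x).mp hxC
    have hGx : G *ᵥ (Gᵀ *ᵥ v) = 0 := by
      ext i
      have := hxd (G i) (hrow i)
      simpa [Matrix.mulVec, dotProduct_comm] using this
    rw [Matrix.mulVec_mulVec] at hGx
    by_cases hv : v = 0
    · simp [hv]
    · exact absurd ⟨v, hv, hGx⟩ h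
end

section
/- Let C be an [n,k] code over F_q with generator matrix (I_k | A) and let x, y ∈ F_q^{n−k} with (x,x) = (y,y) = (x,y) = 0. Let C(A(x,y)) be the code with generator matrix (I_k | A(x,y)), where the i-th row of A(x,y) is r_i + (r_i,y)x − (r_i,x)y with r_i the i-th row of A. Then dim(Hull(C(A(x,y)))) = dim(Hull(C)). -/
open Matrix

/-- The matrix `A(x,y)` whose `i`-th row is `r_i + (r_i,y)x - (r_i,x)y`. -/
def rowOp {F : Type*} [Field F] {k m : ℕ} (A : Matrix (Fin k) (Fin m) F)
    (x y : Fin m → F) : Matrix (Fin k) (Fin m) F :=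
  Matrix.of fun i => A i + (A i ⬝ᵥ y) • x - (A i ⬝ᵥ x) • y

/-- The code with generator matrix `(I_k | A)`, i.e. the row span of that matrix. -/
def genCode {F : Type*} [Field F] {k m : ℕ} (A : Matrix (Fin k) (Fin m) F) :
    Submodule F (Fin k ⊕ Fin m → F) :=
  Submodule.span F (Set.range (Matrix.fromCols (1 : Matrix (Fin k) (Fin k) F) A))



section Aux
variable {F : Type*} [Field F] {k m : ℕ}

/-- The linear map `w ↦ w + (w⬝y)x - (w⬝x)y`. -/
def fmap (x y : Fin m → F) : (Fin m → F) →ₗ[F] (Fin m → F) where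
  toFun w := w + (w ⬝ᵥ y) • x - (w ⬝ᵥ x) • y
  map_add' a b := by
    simp only [add_dotProduct, add_smul]
    abel
  map_smul' t a := by
    simp only [smul_dotProduct, smul_eq_mul, RingHom.id_apply]
    module

lemma fmap_apply (x y w : Fin m → F) :
    fmap x y w = w + (w ⬝ᵥ y) • x - (w ⬝ᵥ x) • y := rfl

lemma fmap_dot (x y : Fin m → F) (hx : x ⬝ᵥ x = 0) (hy : y ⬝ᵥ y = 0)
    (hxy : x ⬝ᵥ y = 0) (v w : Fin m → F) :
    fmap x y v ⬝ᵥ fmap x y w = v ⬝ᵥ w := by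
  have hyx : y ⬝ᵥ x = 0 := by rw [dotProduct_comm]; exact hxy
  simp only [fmap_apply, add_dotProduct, sub_dotProduct,
    dotProduct_add, dotProduct_sub, smul_dotProduct,
    dotProduct_smul, hx, hy, hxy, hyx, smul_eq_mul, mul_zero]
  have h1 : x ⬝ᵥ w = w ⬝ᵥ x := dotProduct_comm _ _
  have h2 : y ⬝ᵥ w = w ⬝ᵥ y := dotProduct_comm _ _
  rw [h1, h2]; ring

lemma fmap_inv (x y : Fin m → F) (hx : x ⬝ᵥ x = 0) (hy : y ⬝ᵥ y = 0)
    (hxy : x ⬝ᵥ y = 0) (w : Fin m → F) :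
    fmap y x (fmap x y w) = w := by
  have hyx : y ⬝ᵥ x = 0 := by rw [dotProduct_comm]; exact hxy
  simp only [fmap_apply, add_dotProduct, sub_dotProduct,
    smul_dotProduct, hx, hy, hxy, hyx, smul_eq_mul, mul_zero, sub_zero]
  module

end Aux

section Aux2
variable {F : Type*} [Field F] {k m : ℕ}

/-- The full-space map acting as identity on the first block and `fmap x y` on the second. -/
def Tmap (k : ℕ) (x y : Fin m → F) : ((Fin k ⊕ Fin m) → F) →ₗ[F] ((Fin k ⊕ Fin m) → F) where
  toFun v := Sum.elim (v ∘ Sum.inl) (fmap x y (v ∘ Sum.inr))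
  map_add' a b := by
    have h : (a + b) ∘ Sum.inr = a ∘ Sum.inr + b ∘ Sum.inr := rfl
    funext s; cases s <;> simp [h, map_add]
  map_smul' t a := by
    have h : (t • a) ∘ Sum.inr = t • (a ∘ Sum.inr) := rfl
    funext s; cases s <;> simp [h, _root_.map_smul]

lemma Tmap_inl (x y : Fin m → F) (v : (Fin k ⊕ Fin m) → F) (i : Fin k) :
    Tmap k x y v (Sum.inl i) = v (Sum.inl i) := rfl

lemma Tmap_inr (x y : Fin m → F) (v : (Fin k ⊕ Fin m) → F) (j : Fin m) :
    Tmap k x y v (Sum.inr j) = fmap x y (v ∘ Sum.inr) j := rfl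

lemma sum_dot (v w : (Fin k ⊕ Fin m) → F) :
    v ⬝ᵥ w = (v ∘ Sum.inl) ⬝ᵥ (w ∘ Sum.inl) + (v ∘ Sum.inr) ⬝ᵥ (w ∘ Sum.inr) := by
  simp [dotProduct, Fintype.sum_sum_type, Function.comp]

lemma Tmap_inv (x y : Fin m → F) (hx : x ⬝ᵥ x = 0) (hy : y ⬝ᵥ y = 0)
    (hxy : x ⬝ᵥ y = 0) (v : (Fin k ⊕ Fin m) → F) :
    Tmap k y x (Tmap k x y v) = v := by
  funext s
  cases s with
  | inl i => rfl
  | inr j =>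
    have h : (Tmap k x y v) ∘ Sum.inr = fmap x y (v ∘ Sum.inr) := rfl
    rw [Tmap_inr, h, fmap_inv x y hx hy hxy]
    exact rfl

lemma Tmap_dot (x y : Fin m → F) (hx : x ⬝ᵥ x = 0) (hy : y ⬝ᵥ y = 0)
    (hxy : x ⬝ᵥ y = 0) (v w : (Fin k ⊕ Fin m) → F) :
    Tmap k x y v ⬝ᵥ Tmap k x y w = v ⬝ᵥ w := by
  rw [sum_dot, sum_dot v w]
  have h1 : (Tmap k x y v) ∘ Sum.inl = v ∘ Sum.inl := rfl
  have h2 : (Tmap k x y v) ∘ Sum.inr = fmap x y (v ∘ Sum.inr) := rfl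
  have h3 : (Tmap k x y w) ∘ Sum.inl = w ∘ Sum.inl := rfl
  have h4 : (Tmap k x y w) ∘ Sum.inr = fmap x y (w ∘ Sum.inr) := rfl
  rw [h1, h2, h3, h4, fmap_dot x y hx hy hxy]

lemma Tmap_row (x y : Fin m → F) (A : Matrix (Fin k) (Fin m) F) (i : Fin k) :
    Tmap k x y (Matrix.fromCols (1 : Matrix (Fin k) (Fin k) F) A i) =
      Matrix.fromCols (1 : Matrix (Fin k) (Fin k) F) (rowOp A x y) i := by
  funext s
  cases s with
  | inl j => rfl
  | inr j =>
    have h : (Matrix.fromCols (1 : Matrix (Fin k) (Fin k) F) A i) ∘ Sum.inr = A i := by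
      funext l; simp [Matrix.fromCols]
    rw [Tmap_inr, h]
    simp [Matrix.fromCols, rowOp, fmap_apply]

lemma Tmap_genCode (x y : Fin m → F) (A : Matrix (Fin k) (Fin m) F) :
    Submodule.map (Tmap k x y) (genCode A) = genCode (rowOp A x y) := by
  erw [genCode, genCode, Submodule.map_span, ← Set.range_comp]
  have h : ⇑(Tmap k x y) ∘ (Matrix.fromCols (1 : Matrix (Fin k) (Fin k) F) A) =
      Matrix.fromCols (1 : Matrix (Fin k) (Fin k) F) (rowOp A x y) :=
    funext (Tmap_row x y A)
  rw [h]

lemma mem_dualCode {C : Submodule F ((Fin k ⊕ Fin m) → F)} {w : (Fin k ⊕ Fin m) → F} :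
    w ∈ dualCode C ↔ ∀ c ∈ C, w ⬝ᵥ c = 0 := Iff.rfl

lemma Tmap_dualCode (x y : Fin m → F) (hx : x ⬝ᵥ x = 0) (hy : y ⬝ᵥ y = 0)
    (hxy : x ⬝ᵥ y = 0) (C : Submodule F ((Fin k ⊕ Fin m) → F)) :
    Submodule.map (Tmap k x y) (dualCode C) = dualCode (Submodule.map (Tmap k x y) C) := by
  ext w
  simp only [Submodule.mem_map, mem_dualCode]
  constructor
  · rintro ⟨u, hu, rfl⟩ c' ⟨c, hc, rfl⟩
    rw [Tmap_dot x y hx hy hxy]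
    exact hu c hc
  · intro hw
    refine ⟨Tmap k y x w, ?_, ?_⟩
    · intro c hc
      have hyx : y ⬝ᵥ x = 0 := by rw [dotProduct_comm]; exact hxy
      have h := Tmap_dot y x hy hx hyx w (Tmap k x y c)
      rw [Tmap_inv x y hx hy hxy] at h
      rw [h]
      exact hw _ ⟨c, hc, rfl⟩
    · exact Tmap_inv y x hy hx (by rw [dotProduct_comm]; exact hxy) w

end Aux2

theorem hull_dim_rowOp_eq
    {F : Type*} [Field F] [Fintype F] {k m : ℕ}
    (A : Matrix (Fin k) (Fin m) F) (x y : Fin m → F)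
    (hx : x ⬝ᵥ x = 0) (hy : y ⬝ᵥ y = 0) (hxy : x ⬝ᵥ y = 0) :
    Module.finrank F ↥(genCode (rowOp A x y) ⊓ dualCode (genCode (rowOp A x y))) =
      Module.finrank F ↥(genCode A ⊓ dualCode (genCode A)) := by
  have hyx : y ⬝ᵥ x = 0 := by rw [dotProduct_comm]; exact hxy
  let e : ((Fin k ⊕ Fin m) → F) ≃ₗ[F] ((Fin k ⊕ Fin m) → F) :=
    LinearEquiv.ofLinear (Tmap k x y) (Tmap k y x)
      (LinearMap.ext fun v => Tmap_inv y x hy hx hyx v)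
      (LinearMap.ext fun v => Tmap_inv x y hx hy hxy v)
  have hinj : Function.Injective (Tmap k x y) := e.injective
  have h1 : genCode (rowOp A x y) = Submodule.map (Tmap k x y) (genCode A) :=
    (Tmap_genCode x y A).symm
  rw [h1, ← Tmap_dualCode x y hx hy hxy, ← Submodule.map_inf _ hinj]
  exact LinearEquiv.finrank_map_eq e _
end

section
/- Let C be an [n,k] code over F_q with generator matrix (I_k | A) and let x, y ∈ F_q^{n−k} with (x,x) = (y,y) = (x,y) = 0. Then the code C(A(x,y)) with generator matrix (I_k | A(x,y)) is self-orthogonal if and only if C is self-orthogonal. -/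
open Matrix

lemma span_le_dual_iff {F : Type*} [Field F] {ι : Type*} [Fintype ι] (S : Set (ι → F)) :
    Submodule.span F S ≤ dualCode (Submodule.span F S) ↔
      ∀ a ∈ S, ∀ b ∈ S, a ⬝ᵥ b = 0 := by
  constructor
  · intro h a ha b hb
    exact h (Submodule.subset_span ha) b (Submodule.subset_span hb)
  · intro h v hv c hc
    induction hv using Submodule.span_induction with
    | mem a ha =>
      induction hc using Submodule.span_induction with
      | mem b hb => exact h a ha b hb
      | zero => simp
      | add b c _ _ hb hc => simp [dotProduct_add, hb, hc]
      | smul t b _ hb => simp [dotProduct_smul, hb]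
    | zero => simp
    | add a b _ _ ha hb => simp [add_dotProduct, ha, hb]
    | smul t a _ ha => simp [smul_dotProduct, ha]

lemma genCode_selfOrth_iff {F : Type*} [Field F] {k m : ℕ}
    (A : Matrix (Fin k) (Fin m) F) :
    genCode A ≤ dualCode (genCode A) ↔
      ∀ i j, ((1 : Matrix (Fin k) (Fin k) F) i ⬝ᵥ (1 : Matrix (Fin k) (Fin k) F) j)
        + A i ⬝ᵥ A j = 0 := by
  rw [genCode, span_le_dual_iff]
  constructor
  · intro h i j
    have := h _ ⟨i, rfl⟩ _ ⟨j, rfl⟩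
    simpa [Matrix.fromCols, dotProduct, Fintype.sum_sum_type] using this
  · intro h a ⟨i, hi⟩ b ⟨j, hj⟩
    subst hi; subst hj
    simpa [Matrix.fromCols, dotProduct, Fintype.sum_sum_type] using h i j

theorem rowOp_selfOrthogonal_iff
    {F : Type*} [Field F] [Fintype F] {k m : ℕ}
    (A : Matrix (Fin k) (Fin m) F) (x y : Fin m → F)
    (hx : x ⬝ᵥ x = 0) (hy : y ⬝ᵥ y = 0) (hxy : x ⬝ᵥ y = 0) :
    genCode (rowOp A x y) ≤ dualCode (genCode (rowOp A x y)) ↔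
      genCode A ≤ dualCode (genCode A) := by
  rw [genCode_selfOrth_iff, genCode_selfOrth_iff]
  have key : ∀ i j, rowOp A x y i ⬝ᵥ rowOp A x y j = A i ⬝ᵥ A j := by
    intro i j
    have hyx : y ⬝ᵥ x = 0 := by rwa [dotProduct_comm]
    have hr : ∀ i, rowOp A x y i = A i + (A i ⬝ᵥ y) • x - (A i ⬝ᵥ x) • y := fun _ => rfl
    rw [hr, hr]
    simp only [sub_dotProduct, add_dotProduct,
      dotProduct_sub, dotProduct_add, smul_dotProduct,
      dotProduct_smul, hx, hy, hxy, hyx, smul_eq_mul]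
    rw [dotProduct_comm x (A j), dotProduct_comm y (A j)]
    ring
  simp only [key]
end

section
/- Let C be an [n,k] code over F_q with generator matrix (I_k | A) and let x, y ∈ F_q^{n−k} with (x,x) = (y,y) = (x,y) = 0. Then the code C(A(x,y)) with generator matrix (I_k | A(x,y)) is an LCD code if and only if C is an LCD code. -/
open Matrix

lemma mem_dualCode_span {F : Type*} [Field F] {ι : Type*} [Fintype ι]
    {S : Set (ι → F)} {v : ι → F} :
    v ∈ dualCode (Submodule.span F S) ↔ ∀ s ∈ S, v ⬝ᵥ s = 0 := by
  constructor
  · intro h s hs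
    exact h s (Submodule.subset_span hs)
  · intro h c hc
    induction hc using Submodule.span_induction with
    | mem c hc => exact h c hc
    | zero => simp
    | add a b _ _ ha hb => simp [dotProduct_add, ha, hb]
    | smul t a _ ha => simp [dotProduct_smul, ha]

lemma vecMul_fromColumns_one {F : Type*} [Field F] {k m : ℕ}
    (A : Matrix (Fin k) (Fin m) F) (v : Fin k → F) :
    v ᵥ* fromCols (1 : Matrix (Fin k) (Fin k) F) A = Sum.elim v (v ᵥ* A) := by
  rw [vecMul_fromCols, vecMul_one]

lemma vecMul_dot_row {F : Type*} [Field F] {k m : ℕ}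
    (A : Matrix (Fin k) (Fin m) F) (u : Fin k → F) (i : Fin k) :
    (u ᵥ* A) ⬝ᵥ A i = (u ᵥ* (A * Aᵀ)) i := by
  rw [← vecMul_vecMul]
  simp [vecMul, dotProduct, transpose_apply, mul_comm]

/-- The LCD condition only depends on `A * Aᵀ`. -/
lemma lcd_iff_gram {F : Type*} [Field F] {k m : ℕ} (A : Matrix (Fin k) (Fin m) F) :
    genCode A ⊓ dualCode (genCode A) = ⊥ ↔
      ∀ u : Fin k → F, u + u ᵥ* (A * Aᵀ) = 0 → u = 0 := by
  rw [Submodule.eq_bot_iff]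
  constructor
  · intro h u hu
    have hv : (u ᵥ* fromCols (1 : Matrix (Fin k) (Fin k) F) A) = 0 := by
      apply h
      rw [Submodule.mem_inf]
      constructor
      · rw [genCode, show Set.range (fromCols (1 : Matrix (Fin k) (Fin k) F) A) =
          Set.range (fromCols (1 : Matrix (Fin k) (Fin k) F) A).row from rfl, ← range_vecMulLinear]
        exact ⟨u, rfl⟩
      · rw [genCode, mem_dualCode_span]
        rintro s ⟨i, rfl⟩
        rw [vecMul_fromColumns_one]
        have : (fromCols (1 : Matrix (Fin k) (Fin k) F) A) i =
            Sum.elim ((1 : Matrix (Fin k) (Fin k) F) i) (A i) := by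
          ext (j | j) <;> simp [fromCols]
        rw [this, sumElim_dotProduct_sumElim]
        have h1 : u ⬝ᵥ (1 : Matrix (Fin k) (Fin k) F) i = u i := by
          simp [dotProduct, Matrix.one_apply, eq_comm]
        have h2 : (u ᵥ* A) ⬝ᵥ A i = (u ᵥ* (A * Aᵀ)) i := vecMul_dot_row A u i
        rw [h1, h2]
        have := congrFun hu i
        simpa using this
    ext j
    have := congrFun hv (Sum.inl j)
    rw [vecMul_fromColumns_one] at this
    simpa using this
  · intro h v hv
    rw [Submodule.mem_inf] at hv
    obtain ⟨hv1, hv2⟩ := hv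
    rw [genCode, show Set.range (fromCols (1 : Matrix (Fin k) (Fin k) F) A) =
          Set.range (fromCols (1 : Matrix (Fin k) (Fin k) F) A).row from rfl, ← range_vecMulLinear] at hv1
    obtain ⟨u, rfl⟩ := hv1
    rw [genCode, mem_dualCode_span] at hv2
    have hu : u + u ᵥ* (A * Aᵀ) = 0 := by
      ext i
      have := hv2 _ ⟨i, rfl⟩
      show u i + (u ᵥ* (A * Aᵀ)) i = 0
      rw [← vecMul_dot_row A u i]
      have hrow : (fromCols (1 : Matrix (Fin k) (Fin k) F) A) i =
          Sum.elim ((1 : Matrix (Fin k) (Fin k) F) i) (A i) := by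
        ext (j | j) <;> simp [fromCols]
      rw [show (Matrix.vecMulLinear (fromCols (1 : Matrix (Fin k) (Fin k) F) A)) u =
          u ᵥ* fromCols (1 : Matrix (Fin k) (Fin k) F) A from rfl,
        vecMul_fromColumns_one, hrow, sumElim_dotProduct_sumElim] at this
      have h1 : u ⬝ᵥ (1 : Matrix (Fin k) (Fin k) F) i = u i := by
        simp [dotProduct, Matrix.one_apply, eq_comm]
      rwa [h1] at this
    have : u = 0 := h u hu
    show (Matrix.vecMulLinear _) u = 0
    rw [this]
    simp

lemma rowOp_gram {F : Type*} [Field F] {k m : ℕ}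
    (A : Matrix (Fin k) (Fin m) F) (x y : Fin m → F)
    (hx : x ⬝ᵥ x = 0) (hy : y ⬝ᵥ y = 0) (hxy : x ⬝ᵥ y = 0) :
    rowOp A x y * (rowOp A x y)ᵀ = A * Aᵀ := by
  have hyx : y ⬝ᵥ x = 0 := by rwa [dotProduct_comm]
  ext i j
  have h1 : (rowOp A x y * (rowOp A x y)ᵀ) i j = rowOp A x y i ⬝ᵥ rowOp A x y j := by
    simp [Matrix.mul_apply, dotProduct, transpose_apply]
  have h2 : (A * Aᵀ) i j = A i ⬝ᵥ A j := by
    simp [Matrix.mul_apply, dotProduct, transpose_apply]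
  rw [h1, h2]
  show (A i + (A i ⬝ᵥ y) • x - (A i ⬝ᵥ x) • y) ⬝ᵥ
      (A j + (A j ⬝ᵥ y) • x - (A j ⬝ᵥ x) • y) = A i ⬝ᵥ A j
  simp only [add_dotProduct, sub_dotProduct, smul_dotProduct, dotProduct_add,
    dotProduct_sub, dotProduct_smul, smul_eq_mul, hx, hy, hxy, hyx,
    dotProduct_comm x (A j), dotProduct_comm y (A j)]
  ring

theorem rowOp_lcd_iff
    {F : Type*} [Field F] [Fintype F] {k m : ℕ}
    (A : Matrix (Fin k) (Fin m) F) (x y : Fin m → F)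
    (hx : x ⬝ᵥ x = 0) (hy : y ⬝ᵥ y = 0) (hxy : x ⬝ᵥ y = 0) :
    genCode (rowOp A x y) ⊓ dualCode (genCode (rowOp A x y)) = ⊥ ↔
      genCode A ⊓ dualCode (genCode A) = ⊥ := by
  rw [lcd_iff_gram, lcd_iff_gram, rowOp_gram A x y hx hy hxy]
end

section
/- Let A be a k×(n−k) binary matrix with rows r_1,…,r_k, and let x, y ∈ F_2^{n−k} satisfy wt(x) ≡ 0 (mod 4), wt(y) ≡ 0 (mod 4), and (x,y) = 0. Let r_i' = r_i + (r_i,y)x − (r_i,x)y be the i-th row of A(x,y). Then wt(r_i') ≡ wt(r_i) (mod 4) for all i. -/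
open Matrix

/-- Hamming weight of a vector. -/
def hwt {ι : Type*} [Fintype ι] {F : Type*} [Zero F] [DecidableEq F] (x : ι → F) : ℕ :=
  (Finset.univ.filter fun i => x i ≠ 0).card

/-- Size of the common support of two vectors. -/
def inter {m : ℕ} (a b : Fin m → ZMod 2) : ℕ :=
  (Finset.univ.filter fun i => a i ≠ 0 ∧ b i ≠ 0).card

lemma key {m : ℕ} (a b : Fin m → ZMod 2) :
    hwt (a + b) + 2 * inter a b = hwt a + hwt b := by
  have h : ∀ u v : ZMod 2,
      ((if u + v ≠ 0 then 1 else 0) + 2 * (if u ≠ 0 ∧ v ≠ 0 then 1 else 0) : ℕ)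
      = (if u ≠ 0 then 1 else 0) + (if v ≠ 0 then 1 else 0) := by decide
  simp only [hwt, inter, Finset.card_filter]
  simp only [← Finset.sum_add_distrib, Finset.mul_sum]
  apply Finset.sum_congr rfl
  intro i _
  simpa using h (a i) (b i)

lemma dot_eq {m : ℕ} (a b : Fin m → ZMod 2) :
    a ⬝ᵥ b = (inter a b : ZMod 2) := by
  rw [inter, Finset.card_filter, dotProduct, Nat.cast_sum]
  apply Finset.sum_congr rfl
  intro i _
  have h : ∀ u v : ZMod 2, u * v = ((if u ≠ 0 ∧ v ≠ 0 then 1 else 0 : ℕ) : ZMod 2) := by decide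
  exact h (a i) (b i)

lemma even_of_dot_zero {m : ℕ} (a b : Fin m → ZMod 2) (h : a ⬝ᵥ b = 0) :
    inter a b % 2 = 0 := by
  rw [dot_eq] at h
  have := (ZMod.natCast_eq_zero_iff _ 2).mp h
  omega

lemma hwt_rowOp_aux {m : ℕ}
    (r x y : Fin m → ZMod 2)
    (hx : hwt x % 4 = 0) (hy : hwt y % 4 = 0) (hxy : x ⬝ᵥ y = 0) :
    hwt (r + (r ⬝ᵥ y) • x - (r ⬝ᵥ x) • y) % 4 = hwt r % 4 := by
  have two : ∀ z : ZMod 2, z = 0 ∨ z = 1 := by decide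
  have hsub : ∀ u v : Fin m → ZMod 2, u - v = u + v := by
    intro u v; funext j; exact CharTwo.sub_eq_add _ _
  rcases two (r ⬝ᵥ x) with hrx | hrx <;> rcases two (r ⬝ᵥ y) with hry | hry
  · simp [hrx, hry]
  · have : r + (r ⬝ᵥ y) • x - (r ⬝ᵥ x) • y = r + x := by
      simp [hrx, hry]
    rw [this]
    have hk := key r x
    have he := even_of_dot_zero r x hrx
    omega
  · have : r + (r ⬝ᵥ y) • x - (r ⬝ᵥ x) • y = r + y := by
      rw [hrx, hry, hsub]; simp
    rw [this]
    have hk := key r y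
    have he := even_of_dot_zero r y hry
    omega
  · have : r + (r ⬝ᵥ y) • x - (r ⬝ᵥ x) • y = r + (x + y) := by
      rw [hrx, hry, hsub]; simp [add_assoc]
    rw [this]
    have hk1 := key r (x + y)
    have hk2 := key x y
    have he2 := even_of_dot_zero x y hxy
    have hd : r ⬝ᵥ (x + y) = 0 := by
      rw [dotProduct_add, hrx, hry]; decide
    have he1 := even_of_dot_zero r (x + y) hd
    omega

theorem hwt_rowOp_congr_mod_four {k m : ℕ}
    (A : Matrix (Fin k) (Fin m) (ZMod 2)) (x y : Fin m → ZMod 2)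
    (hx : hwt x % 4 = 0) (hy : hwt y % 4 = 0) (hxy : x ⬝ᵥ y = 0) :
    ∀ i, hwt (rowOp A x y i) % 4 = hwt (A i) % 4 := by
  intro i
  exact hwt_rowOp_aux (A i) x y hx hy hxy
end

section
/- Let C be a binary [n,k] code with generator matrix (I_k | A) and let x, y ∈ F_2^{n−k} with wt(x) ≡ wt(y) ≡ 0 (mod 4) and (x,y) = 0. Then the code C(A(x,y)) with generator matrix (I_k | A(x,y)) is doubly even if and only if C is doubly even. -/
open Matrix

open Finset in
lemma zmod2_mul_ite : ∀ z w : ZMod 2, z * w = if z ≠ 0 ∧ w ≠ 0 then 1 else 0 := by decide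

lemma zmod2_add_ne : ∀ z w : ZMod 2,
    (z + w ≠ 0 ↔ ((z ≠ 0 ∨ w ≠ 0) ∧ ¬(z ≠ 0 ∧ w ≠ 0))) := by decide

open Finset in
lemma dot_eq_card {m : ℕ} (a b : Fin m → ZMod 2) :
    a ⬝ᵥ b = ((univ.filter fun i => a i ≠ 0 ∧ b i ≠ 0).card : ZMod 2) := by
  simp only [dotProduct]
  rw [← Finset.sum_boole]
  exact Finset.sum_congr rfl fun i _ => zmod2_mul_ite _ _

open Finset in
lemma hwt_add {m : ℕ} (a b : Fin m → ZMod 2) :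
    hwt (a + b) + 2 * (univ.filter fun i => a i ≠ 0 ∧ b i ≠ 0).card
      = hwt a + hwt b := by
  classical
  have hsup : (univ.filter fun i => (a + b) i ≠ 0)
      = ((univ.filter fun i => a i ≠ 0) ∪ (univ.filter fun i => b i ≠ 0)) \
        ((univ.filter fun i => a i ≠ 0) ∩ (univ.filter fun i => b i ≠ 0)) := by
    ext i
    simp only [mem_filter, mem_sdiff, mem_union, mem_inter, mem_univ, true_and, Pi.add_apply]
    have := zmod2_add_ne (a i) (b i)
    tauto
  have hint : (univ.filter fun i => a i ≠ 0 ∧ b i ≠ 0)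
      = (univ.filter fun i => a i ≠ 0) ∩ (univ.filter fun i => b i ≠ 0) := by
    ext i; simp [mem_filter]
  have hsub : ((univ.filter fun i => a i ≠ 0) ∩ (univ.filter fun i => b i ≠ 0)) ⊆
      ((univ.filter fun i => a i ≠ 0) ∪ (univ.filter fun i => b i ≠ 0)) :=
    Finset.inter_subset_union
  have hcu := Finset.card_union_add_card_inter (univ.filter fun i => a i ≠ 0)
    (univ.filter fun i => b i ≠ 0)
  have hcs := Finset.card_sdiff_of_subset hsub
  have hle := Finset.card_le_card hsub
  unfold hwt
  rw [hsup, hint, hcs]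
  omega

open Finset in
lemma hwt_add_mod {m : ℕ} (a b : Fin m → ZMod 2) (h : a ⬝ᵥ b = 0) :
    hwt (a + b) % 4 = (hwt a + hwt b) % 4 := by
  classical
  have hd := dot_eq_card a b
  rw [h] at hd
  have h2 : 2 ∣ (univ.filter fun i => a i ≠ 0 ∧ b i ≠ 0).card :=
    (ZMod.natCast_eq_zero_iff _ 2).mp hd.symm
  have := hwt_add a b
  omega

open Finset in
lemma hwt_sum_elim {k m : ℕ} (a : Fin k → ZMod 2) (b : Fin m → ZMod 2) :
    hwt (Sum.elim a b) = hwt a + hwt b := by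
  classical
  unfold hwt
  have hL : (Finset.univ.filter fun i => Sum.elim a b i ≠ 0).toLeft
      = Finset.univ.filter fun i => a i ≠ 0 := by ext i; simp
  have hR : (Finset.univ.filter fun i => Sum.elim a b i ≠ 0).toRight
      = Finset.univ.filter fun i => b i ≠ 0 := by ext i; simp
  rw [← Finset.card_toLeft_add_card_toRight, hL, hR]

lemma mem_genCode_iff {k m : ℕ} (M : Matrix (Fin k) (Fin m) (ZMod 2))
    (c : Fin k ⊕ Fin m → ZMod 2) :
    c ∈ genCode M ↔ ∃ u, Sum.elim u (u ᵥ* M) = c := by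
  rw [genCode]
  change c ∈ Submodule.span (ZMod 2)
    (Set.range (Matrix.fromCols (1 : Matrix (Fin k) (Fin k) (ZMod 2)) M).row) ↔ _
  rw [← range_vecMulLinear]
  constructor
  · rintro ⟨u, rfl⟩
    exact ⟨u, by simp [Matrix.vecMulLinear_apply, Matrix.vecMul_fromCols,
      Matrix.vecMul_one]⟩
  · rintro ⟨u, rfl⟩
    exact ⟨u, by simp [Matrix.vecMulLinear_apply, Matrix.vecMul_fromCols,
      Matrix.vecMul_one]⟩

lemma vecMul_rowOp {k m : ℕ} (A : Matrix (Fin k) (Fin m) (ZMod 2))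
    (x y : Fin m → ZMod 2) (u : Fin k → ZMod 2) :
    u ᵥ* rowOp A x y = (u ᵥ* A) + ((u ᵥ* A) ⬝ᵥ y) • x - ((u ᵥ* A) ⬝ᵥ x) • y := by
  have key : ∀ v : Fin m → ZMod 2, (u ᵥ* A) ⬝ᵥ v = ∑ i, u i * (A i ⬝ᵥ v) := by
    intro v
    rw [← Matrix.dotProduct_mulVec]
    rfl
  ext j
  show ∑ i, u i * (A i j + (A i ⬝ᵥ y) * x j - (A i ⬝ᵥ x) * y j)
      = (∑ i, u i * A i j) + ((u ᵥ* A) ⬝ᵥ y) * x j - ((u ᵥ* A) ⬝ᵥ x) * y j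
  rw [key, key, Finset.sum_mul, Finset.sum_mul, ← Finset.sum_add_distrib,
    ← Finset.sum_sub_distrib]
  exact Finset.sum_congr rfl fun i _ => by ring

theorem rowOp_doublyEven_iff {k m : ℕ}
    (A : Matrix (Fin k) (Fin m) (ZMod 2)) (x y : Fin m → ZMod 2)
    (hx : hwt x % 4 = 0) (hy : hwt y % 4 = 0) (hxy : x ⬝ᵥ y = 0) :
    (∀ c ∈ genCode (rowOp A x y), hwt c % 4 = 0) ↔
      (∀ c ∈ genCode A, hwt c % 4 = 0) := by
  have key : ∀ w : Fin m → ZMod 2,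
      hwt (w + (w ⬝ᵥ y) • x - (w ⬝ᵥ x) • y) % 4 = hwt w % 4 := by
    intro w
    have hα : w ⬝ᵥ y = 0 ∨ w ⬝ᵥ y = 1 := by
      generalize w ⬝ᵥ y = z; revert z; decide
    have hβ : w ⬝ᵥ x = 0 ∨ w ⬝ᵥ x = 1 := by
      generalize w ⬝ᵥ x = z; revert z; decide
    rcases hα with hα | hα <;> rcases hβ with hβ | hβ <;> rw [hα, hβ]
    · simp
    · -- w + 0•x - 1•y = w + y (char 2)
      have h1 : w + (0 : ZMod 2) • x - (1 : ZMod 2) • y = w + y := by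
        ext j; simp [CharTwo.sub_eq_add]
      rw [h1, hwt_add_mod w y hα, Nat.add_mod, hy]
      simp
    · have h1 : w + (1 : ZMod 2) • x - (0 : ZMod 2) • y = w + x := by
        ext j; simp
      rw [h1, hwt_add_mod w x hβ, Nat.add_mod, hx]
      simp
    · have h1 : w + (1 : ZMod 2) • x - (1 : ZMod 2) • y = w + (x + y) := by
        ext j; simp [CharTwo.sub_eq_add]; ring
      have hwxy : w ⬝ᵥ (x + y) = 0 := by
        rw [dotProduct_add, hα, hβ]
        decide
      have hxy4 : hwt (x + y) % 4 = 0 := by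
        rw [hwt_add_mod x y hxy, Nat.add_mod, hx, hy]
      rw [h1, hwt_add_mod w (x + y) hwxy, Nat.add_mod, hxy4]
      simp
  have main : ∀ M : Matrix (Fin k) (Fin m) (ZMod 2),
      (∀ c ∈ genCode M, hwt c % 4 = 0) ↔ ∀ u, (hwt u + hwt (u ᵥ* M)) % 4 = 0 := by
    intro M
    constructor
    · intro h u
      rw [← hwt_sum_elim]
      exact h _ ((mem_genCode_iff M _).mpr ⟨u, rfl⟩)
    · intro h c hc
      obtain ⟨u, rfl⟩ := (mem_genCode_iff M c).mp hc
      rw [hwt_sum_elim]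
      exact h u
  rw [main, main]
  constructor
  · intro h u
    have := h u
    rw [vecMul_rowOp, Nat.add_mod, key] at this
    rw [Nat.add_mod]
    exact this
  · intro h u
    have := h u
    rw [vecMul_rowOp, Nat.add_mod, key]
    rw [Nat.add_mod] at this
    exact this
end
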